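/- In a commutative idempotent involutive residuated lattice, for a negative element a (a ≤ 1) and any x with a·x = a, one has (¬x ∨ a) ∧ ¬a = ¬x and (x ∧ ¬a) ∨ a = x. -/
import Mathlib


/-- A commutative idempotent involutive residuated lattice. -/
class CIdInRL (α : Type*) extends Lattice α, CommMonoid α, Zero α where
  arrow : α → α → α
  residuation : ∀ x y z : α, x * y ≤ z ↔ y ≤ arrow x z
  idem : ∀ x : α, x * x = x
  involutive : ∀ x : α, arrow (arrow x 0) 0 = x

namespace CIdInRL
variable {α : Type*} [CIdInRL α]
/-- linear negation ¬x := x → 0 -/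
def neg (x : α) : α := arrow x 0
/-- 0_x := x ∧ ¬x -/
def zx (x : α) : α := x ⊓ neg x
/-- 1_x := x ∨ ¬x -/
def ox (x : α) : α := x ⊔ neg x
/-- monoidal order x ⊑ y iff x·y = x -/
def mleq (x y : α) : Prop := x * y = x
end CIdInRL

namespace CIdInRL
variable {α : Type*} [CIdInRL α]

lemma le_neg_iff {x y : α} : y ≤ neg x ↔ x * y ≤ 0 := (residuation x y 0).symm

lemma mul_neg_le (x : α) : x * neg x ≤ 0 := le_neg_iff.mp le_rfl

lemma neg_neg' (x : α) : neg (neg x) = x := involutive x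

lemma mul_le_mul_left'' {y z : α} (h : y ≤ z) (x : α) : x * y ≤ x * z :=
  (residuation x y (x * z)).mpr (le_trans h ((residuation x z (x * z)).mp le_rfl))

lemma mul_le_mul_right'' {y z : α} (h : y ≤ z) (x : α) : y * x ≤ z * x := by
  rw [mul_comm y x, mul_comm z x]; exact mul_le_mul_left'' h x

lemma neg_antitone {x y : α} (h : x ≤ y) : neg y ≤ neg x :=
  le_neg_iff.mpr (le_trans (mul_le_mul_right'' h (neg y)) (mul_neg_le y))

lemma le_of_neg_le {x y : α} (h : neg y ≤ neg x) : x ≤ y := by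
  have := neg_antitone h; rwa [neg_neg', neg_neg'] at this

lemma mul_sup' (x y z : α) : x * (y ⊔ z) = x * y ⊔ x * z := by
  apply le_antisymm
  · refine (residuation _ _ _).mpr (sup_le ?_ ?_)
    · exact (residuation _ _ _).mp le_sup_left
    · exact (residuation _ _ _).mp le_sup_right
  · exact sup_le (mul_le_mul_left'' le_sup_left x) (mul_le_mul_left'' le_sup_right x)

lemma neg_one' : (neg 1 : α) = 0 := by
  apply le_antisymm
  · have := mul_neg_le (1 : α); rwa [one_mul] at this
  · exact le_neg_iff.mpr (by rw [one_mul])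

lemma neg_inf (x y : α) : neg (x ⊓ y) = neg x ⊔ neg y := by
  apply le_antisymm
  · have h : neg (neg x ⊔ neg y) ≤ x ⊓ y :=
      le_inf (le_of_neg_le (by rw [neg_neg']; exact le_sup_left))
             (le_of_neg_le (by rw [neg_neg']; exact le_sup_right))
    have := neg_antitone h; rwa [neg_neg'] at this
  · exact sup_le (neg_antitone inf_le_left) (neg_antitone inf_le_right)

lemma neg_sup (x y : α) : neg (x ⊔ y) = neg x ⊓ neg y := by
  have := neg_inf (neg x) (neg y)
  rw [neg_neg', neg_neg'] at this
  have h := congrArg neg this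
  rw [neg_neg'] at h; exact h.symm

end CIdInRL

open CIdInRL in
theorem stmt14 {α : Type*} [CIdInRL α] (a x : α) (ha : a ≤ 1) (hx : a * x = a) :
    (neg x ⊔ a) ⊓ neg a = neg x ∧ (x ⊓ neg a) ⊔ a = x := by
  have hax : a ≤ x := by
    calc a = a * x := hx.symm
    _ ≤ 1 * x := mul_le_mul_right'' ha x
    _ = x := one_mul x
  have hnx : neg x ≤ neg a := neg_antitone hax
  -- w := (a ⊔ 0) ⊓ neg a ≤ 0
  have hw : (a ⊔ 0) ⊓ neg a ≤ (0 : α) := by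
    set w : α := (a ⊔ 0) ⊓ neg a with hwdef
    have h1 : w ≤ w * (a ⊔ 0) := by
      have := mul_le_mul_left'' (inf_le_left : w ≤ a ⊔ 0) w
      rwa [idem w] at this
    have h2 : w * a ≤ 0 := by
      calc w * a ≤ neg a * a := mul_le_mul_right'' inf_le_right a
      _ = a * neg a := mul_comm _ _
      _ ≤ 0 := mul_neg_le a
    have h3 : w * 0 ≤ 0 := by
      calc w * 0 ≤ (a ⊔ 0) * 0 := mul_le_mul_right'' inf_le_left 0
      _ = a * 0 ⊔ 0 * 0 := by rw [mul_comm, mul_sup', mul_comm (0:α) a]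
      _ ≤ 1 * 0 ⊔ 0 * 0 := sup_le_sup_right (mul_le_mul_right'' ha 0) _
      _ = 0 := by rw [one_mul, idem]; exact sup_idem 0
    calc w ≤ w * (a ⊔ 0) := h1
    _ = w * a ⊔ w * 0 := mul_sup' w a 0
    _ ≤ 0 ⊔ 0 := sup_le_sup h2 h3
    _ = 0 := sup_idem 0
  -- first equation
  have key : (neg x ⊔ a) ⊓ neg a = neg x := by
    apply le_antisymm
    · set c : α := (neg x ⊔ a) ⊓ neg a with hcdef
      have hc1 : c * x ≤ a ⊔ 0 := by
        calc c * x ≤ (neg x ⊔ a) * x := mul_le_mul_right'' inf_le_left x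
        _ = x * neg x ⊔ a * x := by rw [mul_comm, mul_sup', mul_comm a x]
        _ ≤ 0 ⊔ a := sup_le_sup (mul_neg_le x) (le_of_eq hx)
        _ = a ⊔ 0 := sup_comm 0 a
      have hc2 : c * x ≤ neg a := by
        have hxna : x * neg a ≤ neg a := by
          refine le_neg_iff.mpr ?_
          calc a * (x * neg a) = (a * x) * neg a := (mul_assoc a x (neg a)).symm
          _ = a * neg a := by rw [hx]
          _ ≤ 0 := mul_neg_le a
        calc c * x ≤ neg a * x := mul_le_mul_right'' inf_le_right x
        _ = x * neg a := mul_comm _ _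
        _ ≤ neg a := hxna
      have : c * x ≤ 0 := le_trans (le_inf hc1 hc2) hw
      exact le_neg_iff.mpr (by rwa [mul_comm x c])
    · exact le_inf le_sup_left hnx
  refine ⟨key, ?_⟩
  have h := congrArg neg key
  rwa [CIdInRL.neg_inf, CIdInRL.neg_sup, neg_neg', neg_neg'] at h
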